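/- Let n ≥ 1 be an integer and let α > 0, β > 0, c > 0, η > 0. There exists a constant C > 0 such that for all t > 0 and all D > 0, ∫₀^∞ s^{-n/2} e^{-cD/s} ( ∫₀^∞ e^{-η s w} (t w)^α / (1 + (t w)^β) dw ) ds ≤ C t^{-n/2} (t/D)^{n/2 + α}. -/

import Mathlib

open MeasureTheory Set Real

lemma gamma_lint {a r : ℝ} (ha : 0 < a) (hr : 0 < r) :
    ∫⁻ x in Ioi (0:ℝ), ENNReal.ofReal (x ^ (a-1) * Real.exp (-(r*x))) =
      ENNReal.ofReal ((1/r)^a * Real.Gamma a) := by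
  rw [← Real.integral_rpow_mul_exp_neg_mul_Ioi ha hr,
    MeasureTheory.ofReal_integral_eq_lintegral_ofReal]
  · have := integrableOn_rpow_mul_exp_neg_mul_rpow (p := 1) (s := a-1) (b := r)
      (by linarith) zero_lt_one hr
    simpa [Real.rpow_one, neg_mul, IntegrableOn] using this
  · filter_upwards [ae_restrict_mem measurableSet_Ioi] with x hx
    have hx' : (0:ℝ) < x := hx
    positivity

lemma lintegral_image_deriv {s : Set ℝ} {f f' : ℝ → ℝ} (hs : MeasurableSet s)
    (hf' : ∀ x ∈ s, HasDerivWithinAt f (f' x) s x) (hf : InjOn f s) (g : ℝ → ENNReal) :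
    ∫⁻ x in f '' s, g x = ∫⁻ x in s, ENNReal.ofReal |f' x| * g (f x) := by
  simpa only [ContinuousLinearMap.det_toSpanSingleton] using
    MeasureTheory.lintegral_image_eq_lintegral_abs_det_fderiv_mul volume hs
      (fun x hx => (hf' x hx).hasFDerivWithinAt) hf g

lemma inv_lint {p A : ℝ} (hp : 0 < p - 1) (hA : 0 < A) :
    ∫⁻ x in Ioi (0:ℝ), ENNReal.ofReal (x ^ (-p) * Real.exp (-(A/x))) =
      ENNReal.ofReal ((1/A)^(p-1) * Real.Gamma (p-1)) := by
  have himg : (fun x : ℝ => x⁻¹) '' Ioi 0 = Ioi 0 := by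
    ext x
    constructor
    · rintro ⟨y, hy, rfl⟩; exact mem_Ioi.mpr (inv_pos.mpr (mem_Ioi.mp hy))
    · intro hx; exact ⟨x⁻¹, mem_Ioi.mpr (inv_pos.mpr (mem_Ioi.mp hx)), inv_inv x⟩
  have key := lintegral_image_deriv (s := Ioi (0:ℝ)) (f := fun x => x⁻¹)
      (f' := fun x => -(x^2)⁻¹) measurableSet_Ioi
      (fun x hx => (hasDerivAt_inv (ne_of_gt hx)).hasDerivWithinAt)
      (fun x _ y _ hxy => inv_injective hxy)
      (fun y => ENNReal.ofReal (y ^ ((p-1)-1) * Real.exp (-(A*y))))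
  rw [himg] at key
  rw [← gamma_lint hp hA, key]
  apply setLIntegral_congr_fun measurableSet_Ioi
  intro x hx; beta_reduce
  have hx' : (0:ℝ) < x := hx
  rw [← ENNReal.ofReal_mul (by positivity)]
  congr 1
  have h1 : |(-(x^2)⁻¹)| = (x^2)⁻¹ := by
    rw [abs_neg, abs_inv, abs_of_nonneg (by positivity)]
  have h2 : (x⁻¹) ^ ((p-1)-1) = x ^ (-(p-2)) := by
    rw [Real.inv_rpow hx'.le, ← Real.rpow_neg hx'.le]
    ring_nf
  have h3 : (x^2)⁻¹ = x ^ (-2:ℝ) := by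
    rw [← Real.rpow_natCast x 2, ← Real.rpow_neg hx'.le]
    norm_num
  rw [h1, h2, h3, ← mul_assoc, ← Real.rpow_add hx']
  rw [show (-2 + -(p-2)) = -p by ring]
  rw [mul_comm A x⁻¹, ← div_eq_inv_mul]

theorem stmt_1 (n : ℕ) (hn : 1 ≤ n) (α β c η : ℝ)
    (hα : 0 < α) (hβ : 0 < β) (hc : 0 < c) (hη : 0 < η) :
    ∃ C > 0, ∀ t > (0:ℝ), ∀ D > (0:ℝ),
      (∫⁻ s in Ioi (0:ℝ),
        ENNReal.ofReal (s ^ (-(n:ℝ)/2) * Real.exp (-(c * D) / s)) *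
          ∫⁻ w in Ioi (0:ℝ),
            ENNReal.ofReal (Real.exp (-(η * s * w)) * ((t * w) ^ α / (1 + (t * w) ^ β))))
      ≤ ENNReal.ofReal (C * t ^ (-(n:ℝ)/2) * (t / D) ^ ((n:ℝ)/2 + α)) := by
  set q : ℝ := (n:ℝ)/2 + α with hq
  have hq0 : 0 < q := by positivity
  refine ⟨Real.Gamma (α+1) * (1/η)^(α+1) * (Real.Gamma q * (1/c)^q), by positivity, ?_⟩
  intro t ht D hD
  have hinner : ∀ s ∈ Ioi (0:ℝ),
      (∫⁻ w in Ioi (0:ℝ),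
        ENNReal.ofReal (Real.exp (-(η * s * w)) * ((t * w) ^ α / (1 + (t * w) ^ β))))
      ≤ ENNReal.ofReal (t ^ α * ((1/(η*s))^(α+1) * Real.Gamma (α+1))) := by
    intro s hs
    have hs' : (0:ℝ) < s := hs
    calc (∫⁻ w in Ioi (0:ℝ),
        ENNReal.ofReal (Real.exp (-(η * s * w)) * ((t * w) ^ α / (1 + (t * w) ^ β))))
        ≤ ∫⁻ w in Ioi (0:ℝ),
            ENNReal.ofReal (t ^ α * (w ^ ((α+1)-1) * Real.exp (-(η * s * w)))) := by
          apply lintegral_mono_ae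
          filter_upwards [ae_restrict_mem measurableSet_Ioi] with w hw
          have hw' : (0:ℝ) < w := hw
          apply ENNReal.ofReal_le_ofReal
          have hb : (0:ℝ) ≤ (t*w) ^ β := Real.rpow_nonneg (by positivity) β
          have h1 : (t*w)^α / (1 + (t*w)^β) ≤ (t*w)^α :=
            div_le_self (by positivity) (by linarith)
          have h2 : (t*w)^α = t^α * w^α := Real.mul_rpow ht.le hw'.le
          calc Real.exp (-(η*s*w)) * ((t*w)^α/(1+(t*w)^β))
              ≤ Real.exp (-(η*s*w)) * (t^α * w^α) :=
                mul_le_mul_of_nonneg_left (h1.trans_eq h2) (Real.exp_pos _).le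
            _ = t^α * (w^((α+1)-1) * Real.exp (-(η*s*w))) := by
                rw [show α+1-1 = α by ring]; ring
      _ = ENNReal.ofReal (t^α) *
            ∫⁻ w in Ioi (0:ℝ), ENNReal.ofReal (w^((α+1)-1) * Real.exp (-(η*s*w))) := by
          simp_rw [ENNReal.ofReal_mul (Real.rpow_nonneg ht.le α)]
          rw [lintegral_const_mul' _ _ ENNReal.ofReal_ne_top]
      _ = ENNReal.ofReal (t^α) * ENNReal.ofReal ((1/(η*s))^(α+1) * Real.Gamma (α+1)) := by
          rw [gamma_lint (by linarith) (by positivity)]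
      _ = ENNReal.ofReal (t ^ α * ((1/(η*s))^(α+1) * Real.Gamma (α+1))) :=
          (ENNReal.ofReal_mul (Real.rpow_nonneg ht.le α)).symm
  calc (∫⁻ s in Ioi (0:ℝ),
        ENNReal.ofReal (s ^ (-(n:ℝ)/2) * Real.exp (-(c * D) / s)) *
          ∫⁻ w in Ioi (0:ℝ),
            ENNReal.ofReal (Real.exp (-(η * s * w)) * ((t * w) ^ α / (1 + (t * w) ^ β))))
      ≤ ∫⁻ s in Ioi (0:ℝ),
          ENNReal.ofReal (s ^ (-(n:ℝ)/2) * Real.exp (-(c * D) / s)) *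
            ENNReal.ofReal (t ^ α * ((1/(η*s))^(α+1) * Real.Gamma (α+1))) := by
        apply lintegral_mono_ae
        filter_upwards [ae_restrict_mem measurableSet_Ioi] with s hs
        exact mul_le_mul_right (hinner s hs) _
    _ = ∫⁻ s in Ioi (0:ℝ),
          ENNReal.ofReal (t^α * (1/η)^(α+1) * Real.Gamma (α+1)) *
            ENNReal.ofReal (s ^ (-(q+1)) * Real.exp (-((c*D)/s))) := by
        apply setLIntegral_congr_fun measurableSet_Ioi
        intro s hs; beta_reduce
        have hs' : (0:ℝ) < s := hs
        rw [← ENNReal.ofReal_mul (by positivity), ← ENNReal.ofReal_mul (by positivity)]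
        congr 1
        have e1 : (1/(η*s))^(α+1) = (1/η)^(α+1) * s^(-(α+1)) := by
          rw [one_div, mul_inv, Real.mul_rpow (by positivity) (by positivity),
            Real.inv_rpow hs'.le, ← Real.rpow_neg hs'.le, one_div]
        have e2 : s ^ (-(q+1)) = s ^ (-(n:ℝ)/2) * s ^ (-(α+1)) := by
          rw [← Real.rpow_add hs']; congr 1; rw [hq]; ring
        have e3 : -(c*D)/s = -((c*D)/s) := neg_div s (c*D)
        rw [e1, e2, e3]; ring
    _ = ENNReal.ofReal (t^α * (1/η)^(α+1) * Real.Gamma (α+1)) *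
          ∫⁻ s in Ioi (0:ℝ), ENNReal.ofReal (s ^ (-(q+1)) * Real.exp (-((c*D)/s))) :=
        lintegral_const_mul' _ _ ENNReal.ofReal_ne_top
    _ = ENNReal.ofReal (t^α * (1/η)^(α+1) * Real.Gamma (α+1)) *
          ENNReal.ofReal ((1/(c*D))^((q+1)-1) * Real.Gamma ((q+1)-1)) := by
        rw [inv_lint (by linarith) (by positivity)]
    _ ≤ ENNReal.ofReal ((Real.Gamma (α+1) * (1/η)^(α+1) * (Real.Gamma q * (1/c)^q)) *
          t ^ (-(n:ℝ)/2) * (t / D) ^ q) := by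
        rw [← ENNReal.ofReal_mul (by positivity)]
        apply ENNReal.ofReal_le_ofReal
        apply le_of_eq
        have hq1 : q+1-1 = q := by ring
        rw [hq1]
        simp only [one_div]
        rw [mul_inv, Real.mul_rpow (by positivity) (by positivity),
          div_eq_mul_inv t D, Real.mul_rpow ht.le (by positivity)]
        have ht1 : t^(-(n:ℝ)/2) * t^q = t^α := by
          rw [← Real.rpow_add ht]; congr 1; rw [hq]; ring
        calc t^α * (η⁻¹)^(α+1) * Real.Gamma (α+1) * ((c⁻¹^q * D⁻¹^q) * Real.Gamma q)
            = (Real.Gamma (α+1) * (η⁻¹)^(α+1) * Real.Gamma q * c⁻¹^q * D⁻¹^q) * t^α := by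
              ring
          _ = (Real.Gamma (α+1) * (η⁻¹)^(α+1) * Real.Gamma q * c⁻¹^q * D⁻¹^q) *
                (t^(-(n:ℝ)/2) * t^q) := by rw [ht1]
          _ = Real.Gamma (α+1) * (η⁻¹)^(α+1) * (Real.Gamma q * (c⁻¹)^q) *
                t ^ (-(n:ℝ)/2) * (t^q * (D⁻¹)^q) := by ring
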